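/- arXiv:1901.02424 — 3 statements merged into one kernel-verified Lean document; each statement's English description precedes it below -/
import Mathlib

section
/- Let P be a complex polynomial and suppose that the function z ↦ |e^{P(z)}| tends to 1 as Re(z) → +∞, uniformly in Im(z). Then P is constant with purely imaginary value, i.e., e^{P} is a constant of modulus 1. -/
open Filter Complex Polynomial

/-- A complex polynomial whose values along the real axis tend to `0` at `+∞` is zero. -/
lemma aux_poly_zero (S : Polynomial ℂ)
    (hS : Tendsto (fun t : ℝ => S.eval (t : ℂ)) atTop (nhds 0)) : S = 0 := by
  by_cases hd : 0 < S.degree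
  · exfalso
    have hnorm : Tendsto (fun t : ℝ => ‖S.eval ((t : ℂ))‖) atTop atTop := by
      apply S.tendsto_norm_atTop hd
      · simpa using tendsto_abs_atTop_atTop
    have h1 := hnorm.eventually_ge_atTop 1
    have h0 := (hS.norm).eventually (gt_mem_nhds (show ‖(0:ℂ)‖ < 1/2 by norm_num))
    rcases (h1.and h0).exists with ⟨t, ha, hb⟩
    linarith
  · -- S is constant
    have hle : S.degree ≤ 0 := le_of_not_gt hd
    have hC : S = C (S.coeff 0) := (Polynomial.eq_C_of_degree_le_zero hle)
    have h2 : Tendsto (fun _ : ℝ => S.coeff 0) atTop (nhds 0) := by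
      have := hS
      rw [hC] at this
      simpa using this
    have h0 : S.coeff 0 = 0 := tendsto_nhds_unique tendsto_const_nhds h2
    rw [hC, h0, map_zero]

/-- If `|e^{P(z)}| → 1` as `Re z → +∞` uniformly in `Im z`, then the polynomial
`P` is constant with purely imaginary value. -/
theorem stmt_1 (P : Polynomial ℂ)
    (h : ∀ ε > (0 : ℝ), ∃ X : ℝ, ∀ z : ℂ, X ≤ z.re →
        |‖Complex.exp (P.eval z)‖ - 1| < ε) :
    P.natDegree = 0 ∧ (P.coeff 0).re = 0 := by
  -- Step 1: Re (P.eval z) = 0 for all z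
  have key : ∀ z : ℂ, (P.eval z).re = 0 := by
    intro z
    set s : ℂ := z.im * I with hs
    set Q : Polynomial ℂ := P.comp (X + C s) with hQ
    have hQeval : ∀ t : ℝ, Q.eval (t : ℂ) = P.eval ((t : ℂ) + s) := by
      intro t; simp [hQ]
    -- Re (Q.eval t) → 0 as t → ∞
    have hre : Tendsto (fun t : ℝ => (Q.eval (t : ℂ)).re) atTop (nhds 0) := by
      have hexp : Tendsto (fun t : ℝ => Real.exp ((Q.eval (t : ℂ)).re)) atTop (nhds 1) := by
        rw [Metric.tendsto_atTop]
        intro ε hε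
        obtain ⟨X, hX⟩ := h ε hε
        refine ⟨X, fun t ht => ?_⟩
        have hrez : ((t : ℂ) + s).re = t := by simp [hs]
        have hb := hX ((t : ℂ) + s) (by rw [hrez]; exact ht)
        rw [Complex.norm_exp] at hb
        rw [Real.dist_eq, hQeval t]
        exact hb
      have hcont : ContinuousAt Real.log 1 := Real.continuousAt_log one_ne_zero
      have hlog := hcont.tendsto.comp hexp
      rw [Real.log_one] at hlog
      simp only [Function.comp_def, Real.log_exp] at hlog
      exact hlog
    -- The polynomial S := Q + conj Q vanishes
    set S : Polynomial ℂ := Q + Q.map (starRingEnd ℂ) with hSdef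
    have hconj : ∀ t : ℝ, (Q.map (starRingEnd ℂ)).eval ((t : ℂ))
        = (starRingEnd ℂ) (Q.eval ((t : ℂ))) := by
      intro t
      rw [Polynomial.eval_map]
      have h1 : ((t : ℂ)) = (starRingEnd ℂ) ((t : ℂ)) := by simp
      conv_lhs => rw [h1]
      exact Polynomial.eval₂_at_apply (starRingEnd ℂ) ((t : ℂ))
    have hSeval : ∀ t : ℝ, S.eval (t : ℂ) = 2 * ((Q.eval (t : ℂ)).re : ℂ) := by
      intro t
      simp only [hSdef, Polynomial.eval_add, hconj t]
      rw [Complex.add_conj]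
      norm_num
    have hS0 : S = 0 := by
      apply aux_poly_zero
      have h1 : Tendsto (fun t : ℝ => (((Q.eval (t : ℂ)).re : ℝ) : ℂ)) atTop (nhds 0) := by
        have := (Complex.continuous_ofReal.tendsto 0).comp hre
        simpa [Function.comp_def] using this
      have h2 : Tendsto (fun t : ℝ => 2 * (((Q.eval (t : ℂ)).re : ℝ) : ℂ)) atTop (nhds 0) := by
        simpa using h1.const_mul (2 : ℂ)
      exact Tendsto.congr (fun t => (hSeval t).symm) h2
    -- evaluate S at z.re
    have hz : (Q.eval ((z.re : ℂ))).re = 0 := by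
      have he := congrArg (fun p => Polynomial.eval ((z.re : ℂ)) p) hS0
      simp only [Polynomial.eval_zero] at he
      rw [hSeval z.re] at he
      have h2 : ((Q.eval ((z.re : ℂ))).re : ℂ) = 0 := by
        linear_combination he / 2
      exact_mod_cast congrArg Complex.re h2
    have hzz : (z.re : ℂ) + s = z := by
      rw [hs]; exact Complex.re_add_im z
    rw [hQeval z.re, hzz] at hz
    exact hz
  constructor
  · by_contra hne
    have hpos : 0 < P.natDegree := Nat.pos_of_ne_zero hne
    have hdeg : 0 < (P - C 1).degree := by
      rw [← Polynomial.natDegree_pos_iff_degree_pos]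
      rwa [Polynomial.natDegree_sub_C]
    obtain ⟨z, hz⟩ := Complex.exists_root hdeg
    have h1 : P.eval z = 1 := by
      simpa [Polynomial.IsRoot, sub_eq_zero] using hz
    have h2 := key z
    rw [h1] at h2
    norm_num at h2
  · have := key 0
    rwa [← Polynomial.coeff_zero_eq_eval_zero] at this
end

section
/- Let (a_k)_{k≥1} be a sequence of nonzero complex numbers with |a_k| ≤ |a_{k+1}|, and let n(r) denote the number of k with |a_k| < r. Fix integers p ≥ 1 and q ≥ 1. If n(r) = o(r^p (log r)^{q−1}) as r → +∞, then the series ∑_{k=1}^{∞} 1/|a_k|^{p+1} converges. -/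
open Filter Real Asymptotics

/-- If the counting function `n(r) = #{k : |a_k| < r}` of a sequence of nonzero
complex numbers with nondecreasing moduli satisfies `n(r) = o(r^p (log r)^{q-1})`, then
`∑ 1/|a_k|^{p+1}` converges. -/
theorem stmt_4 (a : ℕ → ℂ) (ha : ∀ k, a k ≠ 0) (hmono : ∀ k, ‖a k‖ ≤ ‖a (k + 1)‖)
    (p q : ℕ) (hp : 1 ≤ p) (hq : 1 ≤ q)
    (n : ℝ → ℝ) (hfin : ∀ r : ℝ, {k : ℕ | ‖a k‖ < r}.Finite)
    (hn : ∀ r : ℝ, n r = ({k : ℕ | ‖a k‖ < r}.ncard : ℝ))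
    (ho : n =o[atTop] fun r : ℝ => r ^ p * (Real.log r) ^ (q - 1)) :
    Summable (fun k => 1 / ‖a k‖ ^ (p + 1)) := by
  set c : ℕ → ℝ := fun k => ‖a k‖ with hc
  have hcpos : ∀ k, 0 < c k := fun k => norm_pos_iff.2 (ha k)
  have hcm : Monotone c := monotone_nat_of_le_succ hmono
  have htend : Tendsto c atTop atTop := by
    rw [← Nat.cofinite_eq_atTop]
    refine tendsto_atTop.2 fun r => ?_
    filter_upwards [(hfin r).eventually_cofinite_notMem] with k hk
    simpa using not_lt.1 hk
  set e : ℝ := (p : ℝ) + 1/2 with he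
  have he0 : (0:ℝ) < e := by positivity
  set s : ℝ := ((p : ℝ) + 1) / e with hs
  have hs1 : 1 < s := by
    rw [hs, lt_div_iff₀ he0, one_mul, he]
    linarith
  have hs0 : (0:ℝ) < s := lt_trans one_pos hs1
  -- log power bound
  have hlog : (fun r : ℝ => Real.log r ^ ((q-1 : ℕ) : ℝ)) =o[atTop] fun r : ℝ => r ^ (1/2 : ℝ) :=
    isLittleO_log_rpow_rpow_atTop _ (by norm_num)
  have hb : ∀ᶠ r : ℝ in atTop, n r ≤ r ^ e := by
    filter_upwards [ho.bound one_pos, hlog.bound one_pos, eventually_ge_atTop (1:ℝ)]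
      with r h1 h2 hr1
    have hr0 : (0:ℝ) < r := lt_of_lt_of_le one_pos hr1
    have hlr : 0 ≤ Real.log r := Real.log_nonneg hr1
    have hnr : n r ≤ r ^ p * Real.log r ^ (q-1) := by
      calc n r ≤ ‖n r‖ := le_norm_self _
        _ ≤ 1 * ‖r ^ p * Real.log r ^ (q-1)‖ := h1
        _ = r ^ p * Real.log r ^ (q-1) := by
            rw [one_mul, Real.norm_of_nonneg (by positivity)]
    have hlg : Real.log r ^ (q-1) ≤ r ^ (1/2 : ℝ) := by
      calc Real.log r ^ (q-1) = Real.log r ^ ((q-1 : ℕ) : ℝ) := by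
            rw [Real.rpow_natCast]
        _ ≤ ‖Real.log r ^ ((q-1 : ℕ) : ℝ)‖ := le_norm_self _
        _ ≤ 1 * ‖r ^ (1/2 : ℝ)‖ := h2
        _ = r ^ (1/2 : ℝ) := by
            rw [one_mul, Real.norm_of_nonneg (Real.rpow_nonneg hr0.le _)]
    calc n r ≤ r ^ p * Real.log r ^ (q-1) := hnr
      _ ≤ r ^ p * r ^ (1/2 : ℝ) := by
          exact mul_le_mul_of_nonneg_left hlg (by positivity)
      _ = r ^ e := by
          rw [he, Real.rpow_add hr0, Real.rpow_natCast]
  obtain ⟨R, hR⟩ := eventually_atTop.1 hb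
  set A : ℝ := (2 ^ e) ^ s with hA
  have hA0 : (0:ℝ) < A := by positivity
  have key : ∀ᶠ k : ℕ in atTop, ‖1 / c k ^ (p+1)‖ ≤ A * ‖((k:ℝ)) ^ (-s)‖ := by
    filter_upwards [htend.eventually_ge_atTop R, htend.eventually_ge_atTop 1,
      eventually_ge_atTop 1] with k hkR hk1 hk1'
    have hck : 0 < c k := hcpos k
    have hkpos : (0:ℝ) < (k:ℝ) := by exact_mod_cast hk1'
    -- counting inequality
    have hsub : (↑(Finset.range (k+1)) : Set ℕ) ⊆ {j : ℕ | c j < 2 * c k} := by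
      intro j hj
      simp only [Finset.coe_range, Set.mem_Iio] at hj
      have : c j ≤ c k := hcm (Nat.lt_succ_iff.1 hj)
      simp only [Set.mem_setOf_eq]
      linarith
    have hcard : ((k:ℝ)) + 1 ≤ n (2 * c k) := by
      rw [hn]
      have := Set.ncard_le_ncard hsub (hfin (2 * c k))
      rw [Set.ncard_coe_finset, Finset.card_range] at this
      exact_mod_cast this
    have h2ck : R ≤ 2 * c k := by linarith
    have hnb : n (2 * c k) ≤ (2 * c k) ^ e := hR _ h2ck
    have hk2 : (k:ℝ) ≤ 2 ^ e * c k ^ e := by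
      have : ((k:ℝ)) ≤ (2 * c k) ^ e := by
        calc (k:ℝ) ≤ (k:ℝ) + 1 := by linarith
          _ ≤ n (2 * c k) := hcard
          _ ≤ (2 * c k) ^ e := hnb
      rwa [Real.mul_rpow (by norm_num) hck.le] at this
    -- raise to power s
    have hes : e * s = (p:ℝ) + 1 := by
      rw [hs]; field_simp
    have hks : (k:ℝ) ^ s ≤ A * c k ^ ((p:ℝ) + 1) := by
      have h1 := Real.rpow_le_rpow hkpos.le hk2 hs0.le
      rwa [Real.mul_rpow (by positivity) (by positivity), ← Real.rpow_mul hck.le, hes] at h1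
    have hcp : c k ^ (p+1) = c k ^ ((p:ℝ) + 1) := by
      rw [← Real.rpow_natCast (c k) (p+1)]
      norm_num
    have hfinal : 1 / c k ^ (p+1) ≤ A * (k:ℝ) ^ (-s) := by
      have h2 : 1 / c k ^ ((p:ℝ)+1) ≤ A / (k:ℝ) ^ s := by
        rw [div_le_div_iff₀ (by positivity) (by positivity), one_mul]
        exact hks
      rw [hcp, Real.rpow_neg hkpos.le, ← div_eq_mul_inv]
      exact h2
    rw [Real.norm_of_nonneg (by positivity), Real.norm_of_nonneg (Real.rpow_nonneg hkpos.le _)]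
    exact hfinal
  have hsum : Summable (fun k : ℕ => ((k:ℝ)) ^ (-s)) :=
    Real.summable_nat_rpow.2 (by linarith)
  refine summable_of_isBigO hsum ?_
  rw [Nat.cofinite_eq_atTop]
  exact IsBigO.of_bound A key
end

section
/- Let f be an entire function of finite order ρ(f) ≤ 1 with only finitely many zeros. Then f(z) = R(z) e^{az+b} for some polynomial R and complex constants a, b; more precisely, f = R·e^g where R is the polynomial whose roots are the zeros of f and g is a polynomial of degree at most 1. -/
open Complex Metric MeasureTheory intervalIntegral
open scoped NNReal

lemma aux_exists_primitive {u : ℂ → ℂ} (hu : Differentiable ℂ u) :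
    ∃ v : ℂ → ℂ, v 0 = 0 ∧ ∀ z, HasDerivAt v (u z) z := by
  have hderiv : Differentiable ℂ (deriv u) := by
    have := (analyticOnNhd_univ_iff_differentiable.mpr hu).deriv
    exact analyticOnNhd_univ_iff_differentiable.mp this
  have hcu : Continuous u := hu.continuous
  have hcu' : Continuous (deriv u) := hderiv.continuous
  set F : ℂ → ℝ → ℂ := fun x t => x * u ((t : ℂ) * x) with hF
  set F' : ℂ → ℝ → ℂ :=
    fun x t => u ((t : ℂ) * x) + (t : ℂ) * x * deriv u ((t : ℂ) * x) with hF'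
  have hFcont : ∀ x : ℂ, Continuous (F x) := fun x => by
    exact continuous_const.mul (hcu.comp (Complex.continuous_ofReal.mul continuous_const))
  have hF'cont : ∀ x : ℂ, Continuous (F' x) := fun x => by
    apply Continuous.add
    · exact hcu.comp (Complex.continuous_ofReal.mul continuous_const)
    · exact ((Complex.continuous_ofReal.mul continuous_const).mul
        (hcu'.comp (Complex.continuous_ofReal.mul continuous_const)))
  refine ⟨fun x => ∫ t in (0:ℝ)..1, F x t, by simp [hF], fun x₀ => ?_⟩
  -- bound on compact set
  obtain ⟨M, hM⟩ : ∃ M, ∀ p ∈ (Set.Icc (0:ℝ) 1 ×ˢ closedBall x₀ 1),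
      ‖u ((p.1 : ℂ) * p.2) + (p.1 : ℂ) * p.2 * deriv u ((p.1 : ℂ) * p.2)‖ ≤ M := by
    apply (isCompact_Icc.prod (isCompact_closedBall x₀ 1)).exists_bound_of_continuousOn
    apply Continuous.continuousOn
    have h1 : Continuous fun p : ℝ × ℂ => (p.1 : ℂ) * p.2 :=
      (Complex.continuous_ofReal.comp continuous_fst).mul continuous_snd
    exact (hcu.comp h1).add (h1.mul (hcu'.comp h1))
  have key := hasDerivAt_integral_of_dominated_loc_of_deriv_le (μ := volume)
    (F := F) (F' := F') (x₀ := x₀) (a := 0) (b := 1) (bound := fun _ => M) (s := ball x₀ 1)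
    (ball_mem_nhds x₀ one_pos)
    (Filter.Eventually.of_forall fun x => ((hFcont x).aestronglyMeasurable))
    ((hFcont x₀).intervalIntegrable _ _)
    ((hF'cont x₀).aestronglyMeasurable)
    (Filter.Eventually.of_forall fun t ht x hx => by
      refine hM ((t : ℝ), x) ⟨?_, ball_subset_closedBall hx⟩
      rw [Set.uIoc_of_le (by norm_num : (0:ℝ) ≤ 1)] at ht
      exact Set.mem_Icc_of_Ioc ht)
    (intervalIntegrable_const)
    (Filter.Eventually.of_forall fun t ht x hx => by
      have h1 : HasDerivAt (fun y : ℂ => u ((t : ℂ) * y)) (deriv u ((t:ℂ) * x) * (t:ℂ)) x := by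
        have hinner : HasDerivAt (fun y : ℂ => (t : ℂ) * y) (t : ℂ) x := by
          simpa using (hasDerivAt_id x).const_mul (t : ℂ)
        exact (hu.differentiableAt.hasDerivAt).comp x hinner
      have := (hasDerivAt_id x).mul h1
      simpa [hF, hF', Pi.mul_def] using this.congr_deriv (by simp only [id_eq]; ring))
  obtain ⟨-, hkey⟩ := key
  have hFTC : (∫ t in (0:ℝ)..1, F' x₀ t) = u x₀ := by
    have hder : ∀ t ∈ Set.uIcc (0:ℝ) 1,
        HasDerivAt (fun s : ℝ => (s : ℂ) * u ((s : ℂ) * x₀)) (F' x₀ t) t := by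
      intro t _
      have h1 : HasDerivAt (fun w : ℂ => u (w * x₀)) (deriv u ((t:ℂ) * x₀) * x₀) ((t:ℂ)) := by
        have hinner : HasDerivAt (fun w : ℂ => w * x₀) (x₀) ((t:ℂ)) := by
          simpa using (hasDerivAt_id ((t:ℂ))).mul_const x₀
        exact (hu.differentiableAt.hasDerivAt).comp _ hinner
      have h2 := ((hasDerivAt_id ((t:ℂ))).mul h1).comp_ofReal
      simpa [hF'] using h2.congr_deriv (by simp only [id_eq]; ring)
    have := integral_eq_sub_of_hasDerivAt hder ((hF'cont x₀).intervalIntegrable _ _)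
    simpa using this
  rw [hFTC] at hkey
  exact hkey

lemma aux_exists_log {f : ℂ → ℂ} (hf : Differentiable ℂ f) (hne : ∀ z, f z ≠ 0) :
    ∃ g : ℂ → ℂ, Differentiable ℂ g ∧ ∀ z, f z = Complex.exp (g z) := by
  have hderiv : Differentiable ℂ (deriv f) := by
    have := (analyticOnNhd_univ_iff_differentiable.mpr hf).deriv
    exact analyticOnNhd_univ_iff_differentiable.mp this
  have hu : Differentiable ℂ (fun z => deriv f z / f z) := hderiv.div hf hne
  obtain ⟨v, hv0, hv⟩ := aux_exists_primitive hu
  set g : ℂ → ℂ := fun z => v z + Complex.log (f 0) with hg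
  have hgdiff : Differentiable ℂ g := fun z => ((hv z).differentiableAt.add_const _)
  refine ⟨g, hgdiff, ?_⟩
  have hFconst : ∀ z, f z * Complex.exp (-g z) = f 0 * Complex.exp (-g 0) := by
    intro z
    have hD : ∀ x : ℂ, HasDerivAt (fun w => f w * Complex.exp (-g w)) 0 x := by
      intro x
      have hgx : HasDerivAt g (deriv f x / f x) x := (hv x).add_const _
      have he : HasDerivAt (fun w => Complex.exp (-g w))
          (Complex.exp (-g x) * -(deriv f x / f x)) x := by
        have := (hgx.neg).cexp
        simpa [mul_comm] using this
      have := (hf.differentiableAt.hasDerivAt).mul he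
      have heq : deriv f x * Complex.exp (-g x) +
          f x * (Complex.exp (-g x) * -(deriv f x / f x)) = 0 := by
        field_simp [hne x]
        ring
      rw [heq] at this
      exact this
    have := is_const_of_deriv_eq_zero (f := fun w => f w * Complex.exp (-g w))
      (fun x => (hD x).differentiableAt) (fun x => (hD x).deriv) z 0
    exact this
  intro z
  have h0 : f 0 * Complex.exp (-g 0) = 1 := by
    have hg0 : g 0 = Complex.log (f 0) := by show v 0 + Complex.log (f 0) = _; rw [hv0, zero_add]
    rw [hg0, Complex.exp_neg, Complex.exp_log (hne 0)]
    exact mul_inv_cancel₀ (hne 0)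
  have := hFconst z
  rw [h0] at this
  have hexpne : Complex.exp (-g z) ≠ 0 := Complex.exp_ne_zero _
  field_simp [Complex.exp_neg] at this
  exact (div_eq_one_iff_eq (Complex.exp_ne_zero _)).mp (by rw [div_eq_mul_inv, ← Complex.exp_neg]; exact this)

lemma aux_BC {g : ℂ → ℂ} (hg : Differentiable ℂ g) (h0 : g 0 = 0) {R A : ℝ}
    (hR : 0 < R) (hA : 0 < A) (hre : ∀ z, ‖z‖ ≤ R → (g z).re ≤ A) :
    ∀ z, ‖z‖ ≤ R / 4 → ‖g z‖ ≤ 2 * A := by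
  set D : ℂ → ℂ := fun z => (2 * A : ℝ) - g z with hD
  have hDre : ∀ z, (D z).re = 2 * A - (g z).re := by intro z; simp [hD]
  have hDim : ∀ z, (D z).im = -(g z).im := by intro z; simp [hD]
  have hDne : ∀ z, ‖z‖ ≤ R → D z ≠ 0 := by
    intro z hz hc
    have h1 := hre z hz
    have h2 : (D z).re = 0 := by rw [hc]; simp
    rw [hDre z] at h2
    linarith
  have hnorm_le : ∀ z, ‖z‖ ≤ R → ‖g z‖ ≤ ‖D z‖ := by
    intro z hz
    have h1 := hre z hz
    have hsq : Complex.normSq (g z) ≤ Complex.normSq (D z) := by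
      rw [Complex.normSq_apply, Complex.normSq_apply, hDre z, hDim z]
      nlinarith [sq_nonneg ((g z).im)]
    calc ‖g z‖ = Real.sqrt (Complex.normSq (g z)) := by
          rw [Complex.norm_def]
      _ ≤ Real.sqrt (Complex.normSq (D z)) := Real.sqrt_le_sqrt hsq
      _ = ‖D z‖ := by rw [Complex.norm_def]
  set φ : ℂ → ℂ := fun z => g z / D z with hφ
  have hφ0 : φ 0 = 0 := by simp [hφ, h0]
  have hφle : ∀ z, ‖z‖ ≤ R → ‖φ z‖ ≤ 1 := by
    intro z hz
    rw [hφ]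
    simp only [norm_div]
    exact div_le_one_of_le₀ (hnorm_le z hz) (norm_nonneg _)
  have hφd : DifferentiableOn ℂ φ (ball 0 R) := by
    apply DifferentiableOn.div (hg.differentiableOn)
    · exact (differentiable_const _).sub hg |>.differentiableOn
    · intro z hz
      exact hDne z (le_of_lt (by simpa using mem_ball_zero_iff.mp hz))
  have hmaps : Set.MapsTo φ (ball 0 R) (ball (φ 0) 2) := by
    intro z hz
    rw [hφ0, mem_ball_zero_iff]
    exact lt_of_le_of_lt (hφle z (le_of_lt (mem_ball_zero_iff.mp hz))) one_lt_two
  intro z hz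
  have hzR : ‖z‖ < R := lt_of_le_of_lt hz (by linarith)
  have hzball : z ∈ ball (0:ℂ) R := mem_ball_zero_iff.mpr hzR
  have hSchwarz := Complex.dist_le_div_mul_dist_of_mapsTo_ball hφd (hmaps.mono_right ball_subset_closedBall) hzball
  rw [hφ0, dist_zero_right, dist_zero_right] at hSchwarz
  have hφhalf : ‖φ z‖ ≤ 1 / 2 := by
    calc ‖φ z‖ ≤ 2 / R * ‖z‖ := hSchwarz
      _ ≤ 2 / R * (R / 4) := by
          apply mul_le_mul_of_nonneg_left hz
          positivity
      _ = 1 / 2 := by field_simp; norm_num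
  have hgz : g z = φ z * D z := by
    rw [hφ, div_mul_cancel₀]
    exact hDne z (le_of_lt hzR)
  have hsum : D z + g z = (((2 * A : ℝ)) : ℂ) := by rw [hD]; ring
  have hkey : g z * (1 + φ z) = (((2 * A : ℝ)) : ℂ) * φ z := by
    calc g z * (1 + φ z) = g z + φ z * g z := by ring
      _ = φ z * D z + φ z * g z := by rw [← hgz]
      _ = φ z * (D z + g z) := by ring
      _ = (((2 * A : ℝ)) : ℂ) * φ z := by rw [hsum]; ring
  have hden : (1 : ℝ) / 2 ≤ ‖1 + φ z‖ := by
    have h := norm_sub_le (1 + φ z) (φ z)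
    simp only [add_sub_cancel_right, norm_one] at h
    linarith
  have hnorm_eq : ‖(((2 * A : ℝ)) : ℂ) * φ z‖ = 2 * A * ‖φ z‖ := by
    rw [norm_mul, Complex.norm_real, Real.norm_eq_abs, abs_of_pos (by positivity)]
  have h1 : ‖g z‖ * (1 / 2) ≤ ‖g z‖ * ‖1 + φ z‖ :=
    mul_le_mul_of_nonneg_left hden (norm_nonneg _)
  have h2 : ‖g z‖ * ‖1 + φ z‖ = 2 * A * ‖φ z‖ := by
    rw [← norm_mul, hkey, hnorm_eq]
  nlinarith [hφhalf, norm_nonneg (g z), hA]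

lemma aux_linear {g : ℂ → ℂ} (hg : Differentiable ℂ g) {c : ℝ}
    (hre : ∀ z, (g z).re ≤ c + ‖z‖ ^ (3/2 : ℝ)) :
    ∃ a b : ℂ, ∀ z, g z = a * z + b := by
  set h : ℂ → ℂ := fun z => g z - g 0 with hh_def
  have hh : Differentiable ℂ h := hg.sub_const _
  have hh0 : h 0 = 0 := by simp [hh_def]
  set K : ℝ := |c| + ‖g 0‖ + 1 with hK_def
  have hK : 0 < K := by positivity
  have hreh : ∀ z, (h z).re ≤ K + ‖z‖ ^ (3/2 : ℝ) - 1 := by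
    intro z
    have h1 := hre z
    have h2 : -(g 0).re ≤ ‖g 0‖ := by
      have := Complex.abs_re_le_norm (g 0)
      cases' abs_le.mp this with h3 h4
      linarith
    have : (h z).re = (g z).re - (g 0).re := by simp [hh_def]
    rw [this]
    have : c ≤ |c| := le_abs_self c
    linarith
  set A : ℝ → ℝ := fun r => K + (4 * r) ^ (3/2 : ℝ) with hA_def
  have hbound : ∀ r : ℝ, 0 < r → ∀ z : ℂ, ‖z‖ ≤ r → ‖h z‖ ≤ 2 * A r := by
    intro r hr z hz
    have hA_pos : 0 < A r := by
      have : (0:ℝ) ≤ (4 * r) ^ (3/2 : ℝ) := Real.rpow_nonneg (by linarith) _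
      simp only [hA_def]; linarith
    have := aux_BC hh hh0 (R := 4 * r) (A := A r) (by linarith) hA_pos
      (fun w hw => by
        have h1 := hreh w
        have h2 : ‖w‖ ^ (3/2 : ℝ) ≤ (4 * r) ^ (3/2 : ℝ) :=
          Real.rpow_le_rpow (norm_nonneg _) hw (by norm_num)
        simp only [hA_def]
        linarith)
    exact this z (by linarith)
  -- coefficients of the power series vanish for n ≥ 2
  have hps : HasFPowerSeriesOnBall h (cauchyPowerSeries h 0 ((1:ℝ≥0) : ℝ)) 0 (⊤ : ENNReal) :=
    hh.hasFPowerSeriesOnBall (0 : ℂ) (R := 1) (by norm_num)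
  set p := cauchyPowerSeries h 0 ((1:ℝ≥0) : ℝ) with hp_def
  have hcoeff : ∀ n : ℕ, 2 ≤ n → p n = 0 := by
    intro n hn
    have hbd : ∀ r : ℝ, 1 ≤ r → ‖p n‖ ≤ (2 * K + 16) * r ^ (-(1/2) : ℝ) := by
      intro r hr
      have hr0 : 0 < r := lt_of_lt_of_le one_pos hr
      have hps' : HasFPowerSeriesOnBall h (cauchyPowerSeries h 0 ((⟨r, hr0.le⟩ : ℝ≥0) : ℝ)) 0
          (⊤ : ENNReal) :=
        hh.hasFPowerSeriesOnBall (0 : ℂ) (R := ⟨r, hr0.le⟩) (by exact_mod_cast hr0)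
      have hpeq : p = cauchyPowerSeries h 0 r :=
        hps.hasFPowerSeriesAt.eq_formalMultilinearSeries hps'.hasFPowerSeriesAt
      rw [hpeq]
      have hnorm := norm_cauchyPowerSeries_le h 0 r n
      have hint : (∫ θ : ℝ in (0)..2 * Real.pi, ‖h (circleMap 0 r θ)‖) ≤
          (2 * Real.pi) * (2 * A r) := by
        have : ∀ θ ∈ Set.Icc (0:ℝ) (2 * Real.pi), ‖h (circleMap 0 r θ)‖ ≤ 2 * A r := by
          intro θ _
          apply hbound r hr0
          simp [abs_of_pos hr0]
        calc (∫ θ : ℝ in (0)..2 * Real.pi, ‖h (circleMap 0 r θ)‖)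
            ≤ ∫ _ : ℝ in (0)..2 * Real.pi, (2 * A r) := by
              apply intervalIntegral.integral_mono_on Real.two_pi_pos.le
              · exact ((hh.continuous.norm).comp (continuous_circleMap 0 r)).intervalIntegrable _ _
              · exact intervalIntegrable_const
              · exact this
          _ = (2 * Real.pi) * (2 * A r) := by
              rw [intervalIntegral.integral_const]
              simp only [smul_eq_mul, sub_zero]
      have step1 : ‖cauchyPowerSeries h 0 r n‖ ≤ (2 * A r) * (r ^ n)⁻¹ := by
        refine hnorm.trans ?_
        rw [abs_of_pos hr0, inv_pow]
        have hIb : (2 * Real.pi)⁻¹ * (∫ θ : ℝ in (0)..2 * Real.pi, ‖h (circleMap 0 r θ)‖)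
            ≤ 2 * A r := by
          rw [inv_mul_le_iff₀ (by positivity : (0:ℝ) < 2 * Real.pi)]
          linarith [hint]
        exact mul_le_mul_of_nonneg_right hIb (by positivity)
      refine step1.trans ?_
      -- (2 * A r) / r^n ≤ (2K + 16) * r^(-1/2)
      have h4 : ((4:ℝ)) ^ (3/2:ℝ) = 8 := by
        rw [show (4:ℝ) = 2^(2:ℕ) by norm_num, ← Real.rpow_natCast (2:ℝ) 2,
          ← Real.rpow_mul (by norm_num : (0:ℝ) ≤ 2)]
        norm_num
      have h8 : (4 * r) ^ (3/2:ℝ) = 8 * r ^ (3/2:ℝ) := by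
        rw [Real.mul_rpow (by norm_num : (0:ℝ) ≤ 4) hr0.le, h4]
      have hr32 : (1:ℝ) ≤ r ^ (3/2 : ℝ) := Real.one_le_rpow hr (by norm_num)
      have hA_le : 2 * A r ≤ (2 * K + 16) * r ^ (3/2 : ℝ) := by
        simp only [hA_def, h8]
        nlinarith [hK]
      have hpow : r ^ (3/2 : ℝ) * (r ^ n)⁻¹ ≤ r ^ (-(1/2) : ℝ) := by
        rw [← Real.rpow_natCast r n, ← Real.rpow_neg hr0.le, ← Real.rpow_add hr0]
        apply Real.rpow_le_rpow_of_exponent_le hr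
        have : (2:ℝ) ≤ (n:ℝ) := by exact_mod_cast hn
        linarith
      calc 2 * A r * (r ^ n)⁻¹ ≤ (2 * K + 16) * r ^ (3/2 : ℝ) * (r ^ n)⁻¹ := by
            apply mul_le_mul_of_nonneg_right hA_le (by positivity)
        _ = (2 * K + 16) * (r ^ (3/2 : ℝ) * (r ^ n)⁻¹) := by ring
        _ ≤ (2 * K + 16) * r ^ (-(1/2) : ℝ) := by
            apply mul_le_mul_of_nonneg_left hpow (by positivity)
    have htend : Filter.Tendsto (fun r : ℝ => (2 * K + 16) * r ^ (-(1/2) : ℝ))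
        Filter.atTop (nhds 0) := by
      have := tendsto_rpow_neg_atTop (y := (1/2:ℝ)) (by norm_num)
      simpa using this.const_mul (2 * K + 16)
    have : ‖p n‖ ≤ 0 := by
      apply le_of_tendsto_of_tendsto tendsto_const_nhds htend
      filter_upwards [Filter.eventually_ge_atTop (1:ℝ)] with r hr
      exact hbd r hr
    exact norm_le_zero_iff.mp this
  -- evaluate
  refine ⟨p.coeff 1, p.coeff 0 + g 0, fun z => ?_⟩
  have hz : z ∈ Metric.eball (0:ℂ) ⊤ := by simp
  have hsum := hps.hasSum (y := z) hz
  rw [zero_add] at hsum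
  have hsum2 : HasSum (fun n => p n fun _ => z) ((p 0 fun _ => z) + (p 1 fun _ => z)) := by
    have := hasSum_sum_of_ne_finset_zero (L := SummationFilter.unconditional ℕ) (s := ({0, 1} : Finset ℕ))
      (f := fun n => p n fun _ => z) (fun b hb => by
        have hb2 : 2 ≤ b := by
          rcases Nat.lt_or_ge b 2 with h | h
          · interval_cases b <;> simp_all
          · exact h
        show (p b fun _ => z) = 0
        rw [hcoeff b hb2]
        rfl)
    simpa using this
  have heval : h z = (p 0 fun _ => z) + (p 1 fun _ => z) := hsum.unique hsum2
  have h0' : (p 0 fun _ => z) = p.coeff 0 := by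
    rw [FormalMultilinearSeries.apply_eq_pow_smul_coeff]; simp
  have h1' : (p 1 fun _ => z) = z * p.coeff 1 := by
    rw [FormalMultilinearSeries.apply_eq_pow_smul_coeff]; simp [smul_eq_mul]
  have : g z = h z + g 0 := by simp [hh_def]
  rw [this, heval, h0', h1']
  ring

lemma aux_expform {f : ℂ → ℂ} (hf : Differentiable ℂ f) (hne : ∀ z, f z ≠ 0)
    {C : ℝ} (hC : 0 < C) (hgrow : ∀ z, ‖f z‖ ≤ C * Real.exp (‖z‖ ^ (3/2 : ℝ))) :
    ∃ a b : ℂ, ∀ z, f z = Complex.exp (a * z + b) := by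
  obtain ⟨g, hgd, hgf⟩ := aux_exists_log hf hne
  have hre : ∀ z, (g z).re ≤ Real.log C + ‖z‖ ^ (3/2 : ℝ) := by
    intro z
    have h1 : Real.exp ((g z).re) = ‖f z‖ := by
      rw [hgf z, Complex.norm_exp]
    have h2 : ‖f z‖ ≤ Real.exp (Real.log C + ‖z‖ ^ (3/2 : ℝ)) := by
      rw [Real.exp_add, Real.exp_log hC]
      exact hgrow z
    have := h1.le.trans h2
    exact Real.exp_le_exp.mp this
  obtain ⟨a, b, hab⟩ := aux_linear hgd hre
  exact ⟨a, b, fun z => by rw [hgf z, hab z]⟩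

lemma aux_dslope_diff {f : ℂ → ℂ} (hf : Differentiable ℂ f) (z₀ : ℂ) :
    Differentiable ℂ (dslope f z₀) := by
  intro z
  rcases eq_or_ne z z₀ with rfl | hne
  · obtain ⟨p, hp⟩ := hf.analyticAt z
    exact hp.has_fpower_series_dslope_fslope.analyticAt.differentiableAt
  · exact (differentiableAt_dslope_of_ne hne).mpr (hf z)

lemma aux_iter_diff {f : ℂ → ℂ} (hf : Differentiable ℂ f) (z₀ : ℂ) (k : ℕ) :
    Differentiable ℂ ((Function.swap dslope z₀)^[k] f) := by
  induction k with
  | zero => exact hf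
  | succ k ih =>
    rw [Function.iterate_succ_apply']
    exact aux_dslope_diff ih z₀

lemma aux_nonvanishing_case {f : ℂ → ℂ} (hf : Differentiable ℂ f)
    (hgrow : ∃ C > (0:ℝ), ∀ z, ‖f z‖ ≤ C * Real.exp (‖z‖ ^ (3/2 : ℝ)))
    (hne : ∀ z, f z ≠ 0) :
    ∃ (R : Polynomial ℂ) (a b : ℂ),
      (∀ z : ℂ, f z = R.eval z * Complex.exp (a * z + b)) ∧
      (∀ z : ℂ, R.IsRoot z ↔ f z = 0) := by
  obtain ⟨C, hC, hgr⟩ := hgrow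
  obtain ⟨a, b, hab⟩ := aux_expform hf hne hC hgr
  refine ⟨1, a, b, fun z => by simp [hab z], fun z => by simp [Polynomial.IsRoot, hne z]⟩

lemma aux_main : ∀ (n : ℕ) (f : ℂ → ℂ), Differentiable ℂ f →
    (∃ C > (0:ℝ), ∀ z, ‖f z‖ ≤ C * Real.exp (‖z‖ ^ (3/2 : ℝ))) →
    ∀ (hz : {z : ℂ | f z = 0}.Finite), hz.toFinset.card ≤ n →
    ∃ (R : Polynomial ℂ) (a b : ℂ),
      (∀ z : ℂ, f z = R.eval z * Complex.exp (a * z + b)) ∧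
      (∀ z : ℂ, R.IsRoot z ↔ f z = 0) := by
  intro n
  induction n with
  | zero =>
    intro f hf hgrow hz hcard
    apply aux_nonvanishing_case hf hgrow
    intro z hz0
    have hmem : z ∈ hz.toFinset := by simp [hz0]
    have := Finset.card_pos.mpr ⟨z, hmem⟩
    omega
  | succ n ih =>
    intro f hf hgrow hz hcard
    by_cases hE : ∀ z, f z ≠ 0
    · exact aux_nonvanishing_case hf hgrow hE
    · push_neg at hE
      obtain ⟨z₀, hz₀⟩ := hE
      obtain ⟨p, hp⟩ := hf.analyticAt z₀
      have hpne : p ≠ 0 := by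
        intro h0
        rw [h0] at hp
        have hev : ∀ᶠ z in nhds z₀, f z = 0 := hp.eventually_eq_zero
        obtain ⟨ε, hε, hball⟩ := Metric.eventually_nhds_iff_ball.mp hev
        have himg : (fun t : ℝ => z₀ + (t : ℂ)) '' Set.Ioo 0 ε ⊆ {z | f z = 0} := by
          rintro w ⟨t, ht, rfl⟩
          apply hball
          rw [mem_ball]
          simp only [dist_eq_norm, add_sub_cancel_left]
          rw [Complex.norm_real, Real.norm_eq_abs, abs_of_pos ht.1]
          exact ht.2
        have hinj : Set.InjOn (fun t : ℝ => z₀ + (t : ℂ)) (Set.Ioo 0 ε) := by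
          intro a _ b _ hab
          have : (a : ℂ) = (b : ℂ) := by
            have := hab
            simpa using this
          exact_mod_cast this
        have hinf : ((fun t : ℝ => z₀ + (t : ℂ)) '' Set.Ioo 0 ε).Infinite :=
          (Set.Ioo_infinite hε).image hinj
        exact hinf (hz.subset himg)
      set m := p.order with hm_def
      -- intermediate iterates vanish at z₀
      have hm_zero : ∀ k, k < m → ((Function.swap dslope z₀)^[k] f) z₀ = 0 := by
        intro k hk
        have hk_ps := hp.has_fpower_series_iterate_dslope_fslope k
        have hval : (FormalMultilinearSeries.fslope^[k] p) 0 (fun _ => 1)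
            = ((Function.swap dslope z₀)^[k] f) z₀ := hk_ps.coeff_zero _
        have hcoeff : (FormalMultilinearSeries.fslope^[k] p).coeff 0 = p.coeff k := by
          rw [FormalMultilinearSeries.coeff_iterate_fslope]
          norm_num
        have hzero : p.coeff k = 0 := by
          rw [FormalMultilinearSeries.coeff_eq_zero]
          exact FormalMultilinearSeries.apply_eq_zero_of_lt_order hk
        rw [← hval]
        have : (FormalMultilinearSeries.fslope^[k] p).coeff 0 = 0 := by rw [hcoeff, hzero]
        rw [FormalMultilinearSeries.coeff_eq_zero] at this
        rw [this]
        rfl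
      -- global factorization
      have hfact : ∀ k, k ≤ m → ∀ z, f z
          = (z - z₀) ^ k * ((Function.swap dslope z₀)^[k] f) z := by
        intro k
        induction k with
        | zero => intro _ z; simp
        | succ k ihk =>
          intro hk1 z
          have hk : k < m := Nat.lt_of_succ_le hk1
          have h1 := ihk (le_of_lt hk) z
          have h2 : ((Function.swap dslope z₀)^[k] f) z
              = (z - z₀) * ((Function.swap dslope z₀)^[k+1] f) z := by
            have hs := sub_smul_dslope ((Function.swap dslope z₀)^[k] f) z₀ z
            rw [hm_zero k hk, sub_zero] at hs
            rw [Function.iterate_succ_apply']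
            rw [← hs]
            simp [Function.swap, smul_eq_mul]
          rw [h1, h2, pow_succ]
          ring
      set F := (Function.swap dslope z₀)^[m] f with hF_def
      have hFd : Differentiable ℂ F := aux_iter_diff hf z₀ m
      have hF0 : F z₀ ≠ 0 := hp.iterate_dslope_fslope_ne_zero hpne
      have hfactm : ∀ z, f z = (z - z₀) ^ m * F z := hfact m le_rfl
      have hm_ne : m ≠ 0 := by
        intro h0
        apply hF0
        have := hfactm z₀
        rw [h0] at this
        simpa [hz₀] using this.symm
      have hFz : ∀ z, z ≠ z₀ → (F z = 0 ↔ f z = 0) := by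
        intro z hne
        rw [hfactm z]
        have hpow : (z - z₀) ^ m ≠ 0 := pow_ne_zero _ (sub_ne_zero.mpr hne)
        constructor
        · intro h; rw [h, mul_zero]
        · intro h
          rcases mul_eq_zero.mp h with h | h
          · exact absurd h hpow
          · exact h
      have hsetF : {z : ℂ | F z = 0} = {z : ℂ | f z = 0} \ {z₀} := by
        ext w
        simp only [Set.mem_setOf_eq, Set.mem_diff, Set.mem_singleton_iff]
        rcases eq_or_ne w z₀ with rfl | hne
        · simp [hF0]
        · rw [hFz w hne]
          simp [hne]
      have hzF : {z : ℂ | F z = 0}.Finite := by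
        rw [hsetF]; exact hz.diff
      have hcardF : hzF.toFinset.card ≤ n := by
        have hsub2 : hzF.toFinset ⊆ hz.toFinset.erase z₀ := by
          intro w hw
          rw [Set.Finite.mem_toFinset, hsetF] at hw
          rw [Finset.mem_erase, Set.Finite.mem_toFinset]
          exact ⟨hw.2, hw.1⟩
        have hz₀mem : z₀ ∈ hz.toFinset := by rw [Set.Finite.mem_toFinset]; exact hz₀
        have := Finset.card_le_card hsub2
        have := Finset.card_erase_of_mem hz₀mem
        have := Finset.card_pos.mpr ⟨z₀, hz₀mem⟩
        omega
      -- growth bound for F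
      have hgrowF : ∃ C > (0:ℝ), ∀ z, ‖F z‖ ≤ C * Real.exp (‖z‖ ^ (3/2 : ℝ)) := by
        obtain ⟨C, hC, hgr⟩ := hgrow
        obtain ⟨M, hM⟩ : ∃ M, ∀ w ∈ closedBall z₀ 1, ‖F w‖ ≤ M :=
          (isCompact_closedBall z₀ 1).exists_bound_of_continuousOn
            (hFd.continuous.continuousOn)
        refine ⟨C + max M 0 + 1, by positivity, fun z => ?_⟩
        have hexp1 : (1:ℝ) ≤ Real.exp (‖z‖ ^ (3/2 : ℝ)) := by
          rw [Real.one_le_exp_iff]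
          positivity
        rcases le_or_gt ‖z - z₀‖ 1 with hle | hgt
        · have h1 : ‖F z‖ ≤ M := hM z (by rwa [mem_closedBall, dist_eq_norm])
          have h2 : M ≤ max M 0 := le_max_left _ _
          calc ‖F z‖ ≤ max M 0 := h1.trans h2
            _ = (max M 0) * 1 := (mul_one _).symm
            _ ≤ (C + max M 0 + 1) * Real.exp (‖z‖ ^ (3/2 : ℝ)) := by
                have hmx : max M 0 ≤ C + max M 0 + 1 := by linarith
                apply mul_le_mul hmx hexp1 zero_le_one (by positivity)
        · have h1 : (1:ℝ) ≤ ‖z - z₀‖ ^ m := one_le_pow₀ hgt.le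
          have h2 : ‖F z‖ ≤ ‖f z‖ := by
            rw [hfactm z, norm_mul, norm_pow]
            nlinarith [norm_nonneg (F z)]
          have hmx : C ≤ C + max M 0 + 1 := by
            have := le_max_right M 0
            linarith
          calc ‖F z‖ ≤ ‖f z‖ := h2
            _ ≤ C * Real.exp (‖z‖ ^ (3/2 : ℝ)) := hgr z
            _ ≤ (C + max M 0 + 1) * Real.exp (‖z‖ ^ (3/2 : ℝ)) :=
                mul_le_mul_of_nonneg_right hmx (Real.exp_nonneg _)
      obtain ⟨R₀, a, b, hR₀, hroots₀⟩ := ih F hFd hgrowF hzF hcardF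
      refine ⟨(Polynomial.X - Polynomial.C z₀) ^ m * R₀, a, b, fun z => ?_, fun z => ?_⟩
      · rw [Polynomial.eval_mul, Polynomial.eval_pow, Polynomial.eval_sub, Polynomial.eval_X,
          Polynomial.eval_C, hfactm z, hR₀ z]
        ring
      · rw [Polynomial.IsRoot, Polynomial.eval_mul, Polynomial.eval_pow, Polynomial.eval_sub,
          Polynomial.eval_X, Polynomial.eval_C]
        constructor
        · intro h
          rcases mul_eq_zero.mp h with h | h
          · have hz0 : z = z₀ := by
              have := pow_eq_zero_iff hm_ne |>.mp h
              exact sub_eq_zero.mp this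
            rw [hz0]; exact hz₀
          · have : F z = 0 := (hroots₀ z).mp h
            rw [hfactm z, this, mul_zero]
        · intro h
          rcases eq_or_ne z z₀ with rfl | hne
          · rw [sub_self, zero_pow hm_ne, zero_mul]
          · have : F z = 0 := (hFz z hne).mpr h
            rw [(hroots₀ z).mpr this, mul_zero]

/-- an entire function of order at most `1` with finitely many zeros has the
form `f(z) = R(z) e^{az+b}` with `R` a polynomial whose roots are exactly the zeros of `f`
(Hadamard factorization, special case). The order condition `ρ(f) ≤ 1` is expressed by the
growth bound `‖f z‖ ≤ C exp(‖z‖^{1+ε})` for every `ε > 0`. -/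
theorem stmt_13 (f : ℂ → ℂ) (hf : Differentiable ℂ f)
    (horder : ∀ ε > (0 : ℝ), ∃ C > (0 : ℝ), ∀ z : ℂ,
      ‖f z‖ ≤ C * Real.exp (‖z‖ ^ ((1 : ℝ) + ε)))
    (hzeros : {z : ℂ | f z = 0}.Finite) :
    ∃ (R : Polynomial ℂ) (a b : ℂ),
      (∀ z : ℂ, f z = R.eval z * Complex.exp (a * z + b)) ∧
      (∀ z : ℂ, R.IsRoot z ↔ f z = 0) := by
  have hgrow : ∃ C > (0:ℝ), ∀ z, ‖f z‖ ≤ C * Real.exp (‖z‖ ^ (3/2 : ℝ)) := by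
    obtain ⟨C, hC, hgr⟩ := horder (1/2) (by norm_num)
    refine ⟨C, hC, fun z => ?_⟩
    have : ((1:ℝ) + 1/2) = (3/2 : ℝ) := by norm_num
    rw [← this]
    exact hgr z
  exact aux_main hzeros.toFinset.card f hf hgrow hzeros le_rfl
end
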